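/- In the field F(y) of rational functions, define W(y) := y²/(y² − 1) − δ^{-1}·ϱ + (δ^{-1}·ϱ·C + y/(y² − 1))·C·∏_{i=1}^m (y − c_i^{-1})/(y − c_i), where C := c_1⋯c_m. Then W(y)/y = ∑_{i=1}^m E_i·(y − c_i)^{-1}, where E_i := (ϱ·c_i)^{-1}·((c_i − c_i^{-1})·δ^{-1} + ε)·∏_{j≠i} (c_i − c_j^{-1})/(c_i − c_j). In particular W(y)/y has only simple poles, located among the points c_1, …, c_m, and no pole at 0, 1, −1 or ∞. -/

import Mathlib

open Polynomial Finset

lemma prod_neg_odd' {F : Type*} [CommRing F] {m : ℕ} (hm : Odd m) (f : Fin m → F) :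
    ∏ i, (-f i) = -∏ i, f i := by
  rw [Finset.prod_congr rfl fun i _ => (neg_one_mul (f i)).symm, Finset.prod_mul_distrib,
    Finset.prod_const, Finset.card_univ, Fintype.card_fin, hm.neg_one_pow, neg_one_mul]

lemma scalar_id' {F : Type*} [Field F] (d ϱ ε x : F) (hϱ : ϱ ≠ 0) (hx : x ≠ 0)
    (hε : ε = 1 ∨ ε = -1) {C₀ : F} (hC₀ : ϱ⁻¹ = ε * C₀) :
    (d * ϱ * C₀ * (x ^ 2 - 1) + x) * C₀ * (x - x⁻¹)
      = x * (x ^ 2 - 1) * ((ϱ * x)⁻¹ * ((x - x⁻¹) * d + ε)) := by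
  rcases hε with rfl | rfl
  · rw [one_mul] at hC₀
    rw [← hC₀]
    field_simp
  · have hC : C₀ = -ϱ⁻¹ := by linear_combination hC₀
    rw [hC]
    field_simp
    ring

theorem key_poly' {F : Type*} [Field F] (h2 : (2 : F) ≠ 0) (d ϱ ε : F) (hϱ : ϱ ≠ 0)
    {m : ℕ} (hm : Odd m) (hm1 : 1 ≤ m)
    (c : Fin m → F) (hcinj : Function.Injective c)
    (hc : ∀ i, c i ≠ 0 ∧ c i ≠ 1 ∧ c i ≠ -1)
    (hε : ε = 1 ∨ ε = -1)
    (hϱε : ϱ⁻¹ = ε * ∏ l, c l) :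
    X ^ 2 * (∏ i, (X - C (c i))) - C (d * ϱ) * (X ^ 2 - 1) * (∏ i, (X - C (c i)))
      + (C (d * ϱ * ∏ l, c l) * (X ^ 2 - 1) + X) * C (∏ l, c l) * (∏ i, (X - C ((c i)⁻¹)))
    = X * (X ^ 2 - 1) * ∑ i, C ((ϱ * c i)⁻¹ * ((c i - (c i)⁻¹) * d + ε) *
          ∏ j ∈ Finset.univ.erase i, (c i - (c j)⁻¹) / (c i - c j)) *
        ∏ j ∈ Finset.univ.erase i, (X - C (c j)) := by
  classical
  have hC₀ : (∏ l, c l) ≠ 0 := Finset.prod_ne_zero_iff.mpr fun i _ => (hc i).1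
  rw [← sub_eq_zero]
  have h1m : (1 : F) ≠ -1 := by intro h; exact h2 (by linear_combination h)
  have h0m : (0 : F) ≠ -1 := by intro h; simpa using congrArg Neg.neg h
  set s : Finset F := insert 0 (insert 1 (insert (-1) (Finset.univ.image c))) with hs
  have hcard : s.card = m + 3 := by
    have himg : (Finset.univ.image c).card = m := by
      rw [Finset.card_image_of_injective _ hcinj, Finset.card_univ, Fintype.card_fin]
    rw [hs, Finset.card_insert_of_notMem, Finset.card_insert_of_notMem,
      Finset.card_insert_of_notMem, himg]
    · simp only [Finset.mem_image, Finset.mem_univ, true_and]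
      rintro ⟨i, hi⟩; exact (hc i).2.2 hi
    · simp only [Finset.mem_insert, Finset.mem_image, Finset.mem_univ, true_and]
      rintro (h | ⟨i, hi⟩); exacts [h1m h, (hc i).2.1 hi]
    · simp only [Finset.mem_insert, Finset.mem_image, Finset.mem_univ, true_and]
      rintro (h | h | ⟨i, hi⟩)
      exacts [one_ne_zero h.symm, h0m h, (hc i).1 hi]
  refine Polynomial.eq_zero_of_natDegree_lt_card_of_eval_eq_zero' _ s ?_ ?_
  · -- evaluations
    intro x hx
    simp only [hs, Finset.mem_insert, Finset.mem_image, Finset.mem_univ, true_and] at hx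
    have hQd0 : ∀ y : F, (∀ i, y ≠ c i) → True := fun _ _ => trivial
    rcases hx with rfl | rfl | rfl | ⟨i, rfl⟩
    · -- x = 0
      have e1 : ∏ i, ((0 : F) - c i) = -∏ l, c l := by
        simp only [zero_sub]; exact prod_neg_odd' hm c
      have e2 : ∏ i, ((0 : F) - (c i)⁻¹) = -(∏ l, c l)⁻¹ := by
        simp only [zero_sub]
        rw [prod_neg_odd' hm, Finset.prod_inv_distrib]
      simp only [eval_sub, eval_add, eval_mul, eval_pow, eval_X, eval_C, eval_one, eval_prod,
        eval_finset_sum, e1, e2]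
      field_simp
      ring
    · -- x = 1
      have e3 : (∏ l, c l) * ∏ i, ((1 : F) - (c i)⁻¹) = -∏ i, ((1 : F) - c i) := by
        rw [← Finset.prod_mul_distrib,
          Finset.prod_congr rfl (fun i _ => show c i * (1 - (c i)⁻¹) = -(1 - c i) by
            rw [mul_sub, mul_inv_cancel₀ (hc i).1]; ring),
          prod_neg_odd' hm]
      simp only [eval_sub, eval_add, eval_mul, eval_pow, eval_X, eval_C, eval_one, eval_prod,
        eval_finset_sum]
      ring_nf
      linear_combination e3
    · -- x = -1
      have e4 : (∏ l, c l) * ∏ i, ((-1 : F) - (c i)⁻¹) = ∏ i, ((-1 : F) - c i) := by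
        rw [← Finset.prod_mul_distrib]
        exact Finset.prod_congr rfl fun i _ => show c i * (-1 - (c i)⁻¹) = -1 - c i by
          rw [mul_sub, mul_inv_cancel₀ (hc i).1]; ring
      simp only [eval_sub, eval_add, eval_mul, eval_pow, eval_X, eval_C, eval_one, eval_prod,
        eval_finset_sum]
      ring_nf
      linear_combination -e4
    · -- x = c i
      have hQci : ∏ j, (c i - c j) = 0 :=
        Finset.prod_eq_zero (Finset.mem_univ i) (sub_self (c i))
      have hSne : ∏ j ∈ Finset.univ.erase i, (c i - c j) ≠ 0 :=
        Finset.prod_ne_zero_iff.mpr fun j hj =>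
          sub_ne_zero.mpr fun h => (Finset.mem_erase.mp hj).1 (hcinj h.symm)
      have hsum : ∑ k, (ϱ * c k)⁻¹ * ((c k - (c k)⁻¹) * d + ε) *
            (∏ j ∈ Finset.univ.erase k, (c k - (c j)⁻¹) / (c k - c j)) *
            ∏ j ∈ Finset.univ.erase k, (c i - c j)
          = (ϱ * c i)⁻¹ * ((c i - (c i)⁻¹) * d + ε) *
            ∏ j ∈ Finset.univ.erase i, (c i - (c j)⁻¹) := by
        rw [Finset.sum_eq_single_of_mem i (Finset.mem_univ i)]
        · rw [Finset.prod_div_distrib, mul_assoc, div_mul_cancel₀ _ hSne]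
        · intro k _ hk
          have hz : ∏ j ∈ Finset.univ.erase k, (c i - c j) = 0 :=
            Finset.prod_eq_zero (Finset.mem_erase.mpr ⟨Ne.symm hk, Finset.mem_univ i⟩)
              (sub_self (c i))
          rw [hz, mul_zero]
      have hPci : ∏ j, (c i - (c j)⁻¹)
          = (c i - (c i)⁻¹) * ∏ j ∈ Finset.univ.erase i, (c i - (c j)⁻¹) :=
        (Finset.mul_prod_erase _ _ (Finset.mem_univ i)).symm
      simp only [eval_sub, eval_add, eval_mul, eval_pow, eval_X, eval_C, eval_one, eval_prod,
        eval_finset_sum, hQci, hPci]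
      rw [hsum]
      have hscal : (d * ϱ * (∏ l, c l) * (c i ^ 2 - 1) + c i) * (∏ l, c l) * (c i - (c i)⁻¹)
          = c i * (c i ^ 2 - 1) * ((ϱ * c i)⁻¹ * ((c i - (c i)⁻¹) * d + ε)) :=
        scalar_id' d ϱ ε (c i) hϱ (hc i).1 hε hϱε
      linear_combination (∏ j ∈ Finset.univ.erase i, (c i - (c j)⁻¹)) * hscal
  · -- degree bound
    rw [hcard]
    have hQd : (∏ i, (X - C (c i)) : F[X]).natDegree ≤ m := by
      refine (Polynomial.natDegree_prod_le _ _).trans ?_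
      simp [natDegree_X_sub_C]
    have hPd : (∏ i, (X - C ((c i)⁻¹)) : F[X]).natDegree ≤ m := by
      refine (Polynomial.natDegree_prod_le _ _).trans ?_
      simp [natDegree_X_sub_C]
    have hXd : ((X : F[X]) ^ 2 - 1).natDegree ≤ 2 := by compute_degree
    have hX2 : ((X : F[X]) ^ 2).natDegree = 2 := natDegree_X_pow 2
    have hc1 : (C (d * ϱ) : F[X]).natDegree = 0 := natDegree_C _
    have hc2 : (C (d * ϱ * ∏ l, c l) : F[X]).natDegree = 0 := natDegree_C _
    have hc3 : (C (∏ l, c l) : F[X]).natDegree = 0 := natDegree_C _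
    have hBd : ((∑ i, C ((ϱ * c i)⁻¹ * ((c i - (c i)⁻¹) * d + ε) *
          ∏ j ∈ Finset.univ.erase i, (c i - (c j)⁻¹) / (c i - c j)) *
          ∏ j ∈ Finset.univ.erase i, (X - C (c j))) : F[X]).natDegree ≤ m - 1 := by
      refine Polynomial.natDegree_sum_le_of_forall_le _ _ fun i _ => ?_
      refine (Polynomial.natDegree_mul_le).trans ?_
      have : ((∏ j ∈ Finset.univ.erase i, (X - C (c j))) : F[X]).natDegree ≤ m - 1 := by
        refine (Polynomial.natDegree_prod_le _ _).trans ?_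
        simp [natDegree_X_sub_C, Finset.card_erase_of_mem]
      simpa only [natDegree_C, zero_add] using this
    have h1 : ((X : F[X]) ^ 2 * ∏ i, (X - C (c i))).natDegree ≤ m + 2 := by
      refine natDegree_mul_le.trans ?_; omega
    have hh2 : ((C (d * ϱ) : F[X]) * (X ^ 2 - 1) * ∏ i, (X - C (c i))).natDegree ≤ m + 2 := by
      refine natDegree_mul_le.trans ?_
      have t := natDegree_mul_le (p := (C (d * ϱ) : F[X])) (q := X ^ 2 - 1)
      omega
    have h3 : (((C (d * ϱ * ∏ l, c l) : F[X]) * (X ^ 2 - 1) + X) * C (∏ l, c l) *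
        ∏ i, (X - C ((c i)⁻¹))).natDegree ≤ m + 2 := by
      refine natDegree_mul_le.trans ?_
      have ha : ((C (d * ϱ * ∏ l, c l) : F[X]) * (X ^ 2 - 1) + X).natDegree ≤ 2 := by
        refine (natDegree_add_le _ _).trans (max_le ?_ ?_)
        · refine natDegree_mul_le.trans ?_; omega
        · simp
      have hb := natDegree_mul_le
        (p := ((C (d * ϱ * ∏ l, c l) : F[X]) * (X ^ 2 - 1) + X)) (q := (C (∏ l, c l) : F[X]))
      omega
    have h4 : ((X : F[X]) * (X ^ 2 - 1) * ∑ i, C ((ϱ * c i)⁻¹ * ((c i - (c i)⁻¹) * d + ε) *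
          ∏ j ∈ Finset.univ.erase i, (c i - (c j)⁻¹) / (c i - c j)) *
          ∏ j ∈ Finset.univ.erase i, (X - C (c j))).natDegree ≤ m + 2 := by
      refine natDegree_mul_le.trans ?_
      have t := natDegree_mul_le (p := (X : F[X])) (q := X ^ 2 - 1)
      have hX1 : (X : F[X]).natDegree = 1 := natDegree_X
      omega
    have hfin := (natDegree_sub_le _ _).trans (max_le
      ((natDegree_add_le _ _).trans (max_le ((natDegree_sub_le _ _).trans (max_le h1 hh2)) h3))
      h4)
    omega

/-- Let `F` be a field of characteristic `≠ 2`, `δ = q − q⁻¹` invertible,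
`m` odd, `c₁,…,c_m` pairwise distinct elements of `F∖{0,1,−1}`, `ε ∈ {1,−1}`, and
`ϱ⁻¹ = ε·c₁⋯c_m`.  In `F(y)` set
`W(y) = y²/(y² − 1) − δ⁻¹ϱ + (δ⁻¹ϱ·C + y/(y² − 1))·C·∏ᵢ (y − cᵢ⁻¹)/(y − cᵢ)` with
`C = c₁⋯c_m`.  Then `W(y)/y = ∑ᵢ Eᵢ/(y − cᵢ)`, where
`Eᵢ = (ϱcᵢ)⁻¹((cᵢ − cᵢ⁻¹)δ⁻¹ + ε)·∏_{j≠i}(cᵢ − cⱼ⁻¹)/(cᵢ − cⱼ)`. -/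
theorem stmt_12 {F : Type*} [Field F] (h2 : (2 : F) ≠ 0)
    (q ϱ ε : F) (hq : q ≠ 0) (hδ : q - q⁻¹ ≠ 0) (hϱ : ϱ ≠ 0)
    {m : ℕ} (hm : Odd m) (hm1 : 1 ≤ m)
    (c : Fin m → F) (hcinj : Function.Injective c)
    (hc : ∀ i, c i ≠ 0 ∧ c i ≠ 1 ∧ c i ≠ -1)
    (hε : ε = 1 ∨ ε = -1)
    (hϱε : ϱ⁻¹ = ε * ∏ l, c l) :
    (RatFunc.X ^ 2 / (RatFunc.X ^ 2 - 1) - RatFunc.C ((q - q⁻¹)⁻¹ * ϱ) +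
        (RatFunc.C ((q - q⁻¹)⁻¹ * ϱ * ∏ l, c l) +
            RatFunc.X / (RatFunc.X ^ 2 - 1)) *
          RatFunc.C (∏ l, c l) *
          ∏ i, (RatFunc.X - RatFunc.C ((c i)⁻¹)) / (RatFunc.X - RatFunc.C (c i))) /
        RatFunc.X =
      ∑ i, RatFunc.C ((ϱ * c i)⁻¹ * ((c i - (c i)⁻¹) * (q - q⁻¹)⁻¹ + ε) *
            ∏ j ∈ Finset.univ.erase i, (c i - (c j)⁻¹) / (c i - c j)) *
          (RatFunc.X - RatFunc.C (c i))⁻¹ := by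
  classical
  have hx : (RatFunc.X : RatFunc F) ≠ 0 := RatFunc.X_ne_zero
  have hone : ((RatFunc.X : RatFunc F) ^ 2 - 1) ≠ 0 := by
    have hp : ((X : F[X]) ^ 2 - 1) ≠ 0 := fun h => by
      simpa using congrArg (Polynomial.eval 0) h
    have := RatFunc.algebraMap_ne_zero (K := F) hp
    simpa [map_sub, map_pow, map_one, RatFunc.algebraMap_X] using this
  have hfac : ∀ i : Fin m, (RatFunc.X - RatFunc.C (c i) : RatFunc F) ≠ 0 := fun i => by
    have hp : ((X : F[X]) - C (c i)) ≠ 0 := X_sub_C_ne_zero (c i)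
    have := RatFunc.algebraMap_ne_zero (K := F) hp
    simpa [map_sub, RatFunc.algebraMap_X, RatFunc.algebraMap_C] using this
  have hQ : (∏ i, (RatFunc.X - RatFunc.C (c i)) : RatFunc F) ≠ 0 :=
    Finset.prod_ne_zero_iff.mpr fun i _ => hfac i
  have hkeyK := congrArg (algebraMap F[X] (RatFunc F))
    (key_poly' h2 (q - q⁻¹)⁻¹ ϱ ε hϱ hm hm1 c hcinj hc hε hϱε)
  simp only [map_sub (algebraMap F[X] (RatFunc F)), map_add (algebraMap F[X] (RatFunc F)),
    map_mul (algebraMap F[X] (RatFunc F)), map_pow (algebraMap F[X] (RatFunc F)),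
    map_one (algebraMap F[X] (RatFunc F)), map_prod (algebraMap F[X] (RatFunc F)),
    map_sum (algebraMap F[X] (RatFunc F)),
    RatFunc.algebraMap_X, RatFunc.algebraMap_C] at hkeyK
  have hsum : (∑ i : Fin m, RatFunc.C ((ϱ * c i)⁻¹ * ((c i - (c i)⁻¹) * (q - q⁻¹)⁻¹ + ε) *
          ∏ j ∈ Finset.univ.erase i, (c i - (c j)⁻¹) / (c i - c j)) *
        (RatFunc.X - RatFunc.C (c i))⁻¹)
      = (∑ i : Fin m, RatFunc.C ((ϱ * c i)⁻¹ * ((c i - (c i)⁻¹) * (q - q⁻¹)⁻¹ + ε) *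
          ∏ j ∈ Finset.univ.erase i, (c i - (c j)⁻¹) / (c i - c j)) *
          ∏ j ∈ Finset.univ.erase i, (RatFunc.X - RatFunc.C (c j))) /
        ∏ i : Fin m, (RatFunc.X - RatFunc.C (c i)) := by
    rw [Finset.sum_div]
    refine Finset.sum_congr rfl fun i _ => ?_
    have hT : (∏ j ∈ Finset.univ.erase i, (RatFunc.X - RatFunc.C (c j)) : RatFunc F) ≠ 0 :=
      Finset.prod_ne_zero_iff.mpr fun j _ => hfac j
    rw [← Finset.prod_erase_mul Finset.univ _ (Finset.mem_univ i),
      mul_comm (RatFunc.C ((ϱ * c i)⁻¹ * ((c i - (c i)⁻¹) * (q - q⁻¹)⁻¹ + ε) *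
          ∏ j ∈ Finset.univ.erase i, (c i - (c j)⁻¹) / (c i - c j)))
        (∏ j ∈ Finset.univ.erase i, (RatFunc.X - RatFunc.C (c j))),
      mul_div_mul_left _ _ hT, div_eq_mul_inv]
  rw [hsum, Finset.prod_div_distrib]
  have hS : (∑ i : Fin m, RatFunc.C ((ϱ * c i)⁻¹ * ((c i - (c i)⁻¹) * (q - q⁻¹)⁻¹ + ε) *
          ∏ j ∈ Finset.univ.erase i, (c i - (c j)⁻¹) / (c i - c j)) *
          ∏ j ∈ Finset.univ.erase i, (RatFunc.X - RatFunc.C (c j)))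
      = (RatFunc.X ^ 2 * ∏ i : Fin m, (RatFunc.X - RatFunc.C (c i)) -
          RatFunc.C ((q - q⁻¹)⁻¹ * ϱ) * (RatFunc.X ^ 2 - 1) *
            ∏ i : Fin m, (RatFunc.X - RatFunc.C (c i)) +
          (RatFunc.C ((q - q⁻¹)⁻¹ * ϱ * ∏ l : Fin m, c l) * (RatFunc.X ^ 2 - 1) + RatFunc.X) *
            RatFunc.C (∏ l : Fin m, c l) *
            ∏ i : Fin m, (RatFunc.X - RatFunc.C ((c i)⁻¹))) /
        (RatFunc.X * (RatFunc.X ^ 2 - 1)) := by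
    rw [eq_div_iff (mul_ne_zero hx hone)]
    linear_combination -hkeyK
  rw [hS, div_div, div_eq_div_iff hx (mul_ne_zero (mul_ne_zero hx hone) hQ)]
  linear_combination
    (RatFunc.X ^ 3 * (∏ i : Fin m, (RatFunc.X - RatFunc.C (c i))) +
      RatFunc.X ^ 2 * RatFunc.C (∏ l : Fin m, c l) *
        ∏ i : Fin m, (RatFunc.X - RatFunc.C ((c i)⁻¹))) * (mul_inv_cancel₀ hone) +
    (RatFunc.C ((q - q⁻¹)⁻¹ * ϱ * ∏ l : Fin m, c l) * RatFunc.C (∏ l : Fin m, c l) *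
        (∏ i : Fin m, (RatFunc.X - RatFunc.C ((c i)⁻¹))) * RatFunc.X * (RatFunc.X ^ 2 - 1) +
      RatFunc.X ^ 2 * RatFunc.C (∏ l : Fin m, c l) *
        (∏ i : Fin m, (RatFunc.X - RatFunc.C ((c i)⁻¹))) * (RatFunc.X ^ 2 - 1) *
        (RatFunc.X ^ 2 - 1)⁻¹) * (mul_inv_cancel₀ hQ)
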